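/- 5π²/48 − (log 2)²/4 = Re Li₂((1/2)·e^{πi/2}) − 2·Re Li₂((1/√2)·e^{3πi/4}). -/

import Mathlib

noncomputable def Li (s : ℕ) (z : ℂ) : ℂ := ∑' k : ℕ, z ^ (k + 1) / ((k : ℂ) + 1) ^ s

noncomputable def LiR (s : ℕ) (x : ℝ) : ℝ := ∑' k : ℕ, x ^ (k + 1) / ((k : ℝ) + 1) ^ s

open Complex Real Filter Set

/-! ### Auxiliary lemmas -/

lemma li2_term_norm {z : ℂ} (hz : ‖z‖ ≤ 1) (k : ℕ) :
    ‖z ^ (k + 1) / ((k : ℂ) + 1) ^ 2‖ ≤ 1 / ((k : ℝ) + 1) ^ 2 := by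
  rw [norm_div, norm_pow, norm_pow]
  have h1 : ‖((k : ℂ) + 1)‖ = (k : ℝ) + 1 := by
    rw [show ((k : ℂ) + 1) = ((k + 1 : ℕ) : ℂ) by push_cast; ring, Complex.norm_natCast]
    push_cast; ring
  rw [h1]
  have hk : (0:ℝ) < ((k : ℝ) + 1) ^ 2 := by positivity
  rw [div_le_div_iff₀ hk hk, one_mul]
  have : ‖z‖ ^ (k+1) ≤ 1 := pow_le_one₀ (norm_nonneg z) hz
  nlinarith [hk.le]

lemma inv_sq_summable : Summable (fun k : ℕ => 1 / ((k : ℝ) + 1) ^ 2) := by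
  have h : Summable (fun n : ℕ => 1 / (n : ℝ) ^ 2) :=
    Real.summable_one_div_nat_pow.mpr one_lt_two
  have := (summable_nat_add_iff 1).mpr h
  simpa using this

lemma li2_summable {z : ℂ} (hz : ‖z‖ ≤ 1) :
    Summable (fun k : ℕ => z ^ (k + 1) / ((k : ℂ) + 1) ^ 2) :=
  Summable.of_norm (inv_sq_summable.of_nonneg_of_le (fun k => norm_nonneg _)
    (li2_term_norm hz))

lemma li2_continuousOn : ContinuousOn (fun z : ℂ => Li 2 z) (Metric.closedBall 0 1) := by
  apply continuousOn_tsum (u := fun k : ℕ => 1 / ((k : ℝ) + 1) ^ 2)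
  · intro k
    exact (Continuous.div_const (continuous_pow (k+1)) _).continuousOn
  · exact inv_sq_summable
  · intro k z hz
    rw [Metric.mem_closedBall, dist_zero_right] at hz
    exact li2_term_norm hz k

lemma li2_zero : Li 2 0 = 0 := by
  unfold Li
  convert tsum_zero with k
  simp

lemma li2_one : Li 2 1 = ((Real.pi ^ 2 / 6 : ℝ) : ℂ) := by
  have h := hasSum_zeta_two
  have h1 : HasSum (fun k : ℕ => 1 / ((k : ℝ) + 1) ^ 2) (Real.pi ^ 2 / 6) := by
    have h2 := (hasSum_nat_add_iff (f := fun n : ℕ => 1 / (n : ℝ) ^ 2) 1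
      (g := Real.pi ^ 2 / 6)).mpr (by simpa using h)
    convert h2 using 2 with k
    · rfl
    push_cast; ring
  have h3 : HasSum (fun k : ℕ => ((1 / ((k : ℝ) + 1) ^ 2 : ℝ) : ℂ)) ((Real.pi ^ 2 / 6 : ℝ) : ℂ) :=
    Complex.hasSum_ofReal.mpr h1
  have h4 : (fun k : ℕ => ((1 / ((k : ℝ) + 1) ^ 2 : ℝ) : ℂ)) =
      (fun k : ℕ => (1 : ℂ) ^ (k + 1) / ((k : ℂ) + 1) ^ 2) := by
    funext k; push_cast; simp
  rw [h4] at h3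
  exact h3.tsum_eq

lemma li2_conj (z : ℂ) : Li 2 ((starRingEnd ℂ) z) = (starRingEnd ℂ) (Li 2 z) := by
  unfold Li
  rw [show ((starRingEnd ℂ) (∑' k : ℕ, z ^ (k + 1) / ((k : ℂ) + 1) ^ 2))
      = ∑' k : ℕ, (starRingEnd ℂ) (z ^ (k + 1) / ((k : ℂ) + 1) ^ 2) from tsum_star]
  congr 1; funext k
  rw [map_div₀, map_pow, map_pow]
  congr 2
  simp

lemma li2_duplication {z : ℂ} (hz : ‖z‖ ≤ 1) :
    Li 2 z + Li 2 (-z) = Li 2 (z ^ 2) / 2 := by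
  have hz2 : ‖z ^ 2‖ ≤ 1 := by
    rw [norm_pow]; exact pow_le_one₀ (norm_nonneg z) hz
  have h1 := (li2_summable hz).hasSum
  have h2 := (li2_summable (by rwa [norm_neg] : ‖-z‖ ≤ 1)).hasSum
  have hadd := h1.add h2
  have h3 := ((li2_summable hz2).hasSum.div_const 2)
  have hodd : HasSum (fun m : ℕ =>
      z ^ (2*m+1+1) / (((2*m+1 : ℕ) : ℂ) + 1) ^ 2 + (-z) ^ (2*m+1+1) / (((2*m+1 : ℕ) : ℂ) + 1) ^ 2)
      (Li 2 (z ^ 2) / 2) := by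
    convert h3 using 2 with m
    · rfl
    have hm : (((2*m+1 : ℕ) : ℂ) + 1) = 2 * ((m : ℂ) + 1) := by push_cast; ring
    rw [hm]
    rw [show (2*m+1+1) = 2*(m+1) by ring, pow_mul, neg_pow, pow_mul]
    simp only [neg_one_sq, one_mul]
    have hne : ((m : ℂ) + 1) ≠ 0 := Nat.cast_add_one_ne_zero m
    rw [← pow_mul]
    field_simp
    ring
    rfl
  have hinj : Function.Injective (fun m : ℕ => 2*m+1) := by
    intro a b h
    simp only [] at h; omega
  have hzero : ∀ k ∉ Set.range (fun m : ℕ => 2*m+1),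
      z ^ (k+1) / ((k : ℂ) + 1) ^ 2 + (-z) ^ (k+1) / ((k : ℂ) + 1) ^ 2 = 0 := by
    intro k hk
    have : Even (k + 1) → False := by
      intro ⟨m, hm⟩
      apply hk
      exact ⟨m - 1, show 2*(m-1)+1 = k by omega⟩
    have hodd' : Odd (k+1) := Nat.odd_iff.mpr (by
      rcases Nat.even_or_odd (k+1) with h | h
      · exact absurd h this
      · exact Nat.odd_iff.mp h)
    rw [hodd'.neg_pow]
    ring
  have := (Function.Injective.hasSum_iff hinj hzero).mp hodd
  exact hadd.unique this

lemma hasSum_deriv_series {z : ℂ} (h0 : z ≠ 0) (hz : ‖z‖ < 1) :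
    HasSum (fun k : ℕ => z ^ k / ((k : ℂ) + 1)) (-(Complex.log (1 - z)) / z) := by
  have H := Complex.hasSum_taylorSeries_neg_log hz
  have H1 : HasSum (fun k : ℕ => z ^ (k + 1) / ((k : ℂ) + 1)) (-(Complex.log (1 - z))) := by
    have h2 := (hasSum_nat_add_iff (f := fun n : ℕ => z ^ n / (n : ℂ)) 1
      (g := -(Complex.log (1 - z)))).mpr (by simpa using H)
    convert h2 using 2 with k
    · rfl
    push_cast; ring
  have H2 := H1.mul_left z⁻¹
  have : (fun k : ℕ => z⁻¹ * (z ^ (k + 1) / ((k : ℂ) + 1))) =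
      (fun k : ℕ => z ^ k / ((k : ℂ) + 1)) := by
    funext k; field_simp [pow_succ]; ring
  rw [this] at H2
  convert H2 using 1
  · rfl
  ring

lemma li2_hasDerivAt {z : ℂ} (h0 : z ≠ 0) (hz : ‖z‖ < 1) :
    HasDerivAt (fun w => Li 2 w) (-(Complex.log (1 - z)) / z) z := by
  set r : ℝ := (1 + ‖z‖) / 2 with hr
  have hn : (0:ℝ) ≤ ‖z‖ := norm_nonneg z
  have hr0 : 0 < r := by positivity
  have hr1 : r < 1 := by rw [hr]; linarith
  have hzr : ‖z‖ < r := by rw [hr]; linarith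
  have key := hasDerivAt_tsum_of_isPreconnected
    (u := fun k : ℕ => r ^ k)
    (g := fun (k : ℕ) (w : ℂ) => w ^ (k + 1) / ((k : ℂ) + 1) ^ 2)
    (g' := fun (k : ℕ) (w : ℂ) => w ^ k / ((k : ℂ) + 1))
    (summable_geometric_of_lt_one hr0.le hr1)
    (Metric.isOpen_ball (x := (0:ℂ)) (ε := r))
    ((convex_ball (0:ℂ) r).isPreconnected)
    (fun k y hy => ?_) (fun k y hy => ?_)
    (y₀ := 0) (by simpa [Metric.mem_ball] using hr0) ?_
    (y := z) (by simpa [Metric.mem_ball] using hzr)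
  · have hsum := (hasSum_deriv_series h0 hz).tsum_eq
    rw [hsum] at key
    exact key
  · have hk : ((k : ℂ) + 1) ≠ 0 := Nat.cast_add_one_ne_zero k
    have h := (hasDerivAt_pow (k + 1) y).div_const (((k : ℂ) + 1) ^ 2)
    convert h using 1
    · rfl
    push_cast
    field_simp
  · have hy' : ‖y‖ < r := by simpa [Metric.mem_ball] using hy
    rw [norm_div]
    have h1 : (1:ℝ) ≤ ‖((k : ℂ) + 1)‖ := by
      rw [show ((k : ℂ) + 1) = ((k + 1 : ℕ) : ℂ) by push_cast; ring, Complex.norm_natCast]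
      exact_mod_cast Nat.one_le_iff_ne_zero.mpr (Nat.succ_ne_zero k)
    calc ‖y ^ k‖ / ‖((k : ℂ) + 1)‖ ≤ ‖y ^ k‖ / 1 := by
          apply div_le_div_of_nonneg_left (norm_nonneg _) one_pos h1
      _ = ‖y‖ ^ k := by rw [div_one, norm_pow]
      _ ≤ r ^ k := pow_le_pow_left₀ (norm_nonneg y) hy'.le k
  · apply summable_of_ne_finset_zero (s := ∅)
    intro k _
    simp

/-! ### The reflection identity -/

def RS : Set ℂ := Metric.ball 0 1 ∩ Metric.ball 1 1

noncomputable def RF (z : ℂ) : ℂ := Li 2 z + Li 2 (1 - z) + Complex.log z * Complex.log (1 - z)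

lemma RS_facts {z : ℂ} (hz : z ∈ RS) :
    ‖z‖ < 1 ∧ ‖1 - z‖ < 1 ∧ 0 < z.re ∧ 0 < (1 - z).re := by
  obtain ⟨h1, h2⟩ := hz
  rw [Metric.mem_ball, dist_zero_right] at h1
  rw [Metric.mem_ball, dist_eq_norm] at h2
  have h2' : ‖1 - z‖ < 1 := by rwa [norm_sub_rev] at h2
  refine ⟨h1, h2', ?_, ?_⟩
  · have := Complex.abs_re_le_norm (z - 1)
    have : |(z - 1).re| < 1 := lt_of_le_of_lt this (by exact h2)
    rw [sub_re, one_re] at this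
    have := abs_lt.mp this
    linarith [this.1]
  · have := Complex.abs_re_le_norm z
    have h3 : |z.re| < 1 := lt_of_le_of_lt this (by exact h1)
    rw [sub_re, one_re]
    linarith [(abs_lt.mp h3).2]

lemma RF_hasDerivAt {z : ℂ} (hz : z ∈ RS) : HasDerivAt RF 0 z := by
  obtain ⟨h1, h2, h3, h4⟩ := RS_facts hz
  have hz0 : z ≠ 0 := fun h => by simp [h] at h3
  have hz1 : (1 : ℂ) - z ≠ 0 := fun h => by simp [h] at h4
  have hslit : z ∈ slitPlane := Or.inl h3
  have hslit' : (1 : ℂ) - z ∈ slitPlane := Or.inl h4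
  have inner : HasDerivAt (fun w : ℂ => 1 - w) (-1) z := (hasDerivAt_id z).const_sub 1
  have d1 := li2_hasDerivAt hz0 h1
  have d2' := li2_hasDerivAt hz1 h2
  have d2 : HasDerivAt (fun w : ℂ => Li 2 (1 - w)) ((-(Complex.log (1 - (1 - z))) / (1 - z)) * (-1)) z :=
    HasDerivAt.comp z d2' inner
  have d3 := Complex.hasDerivAt_log hslit
  have d4 : HasDerivAt (fun w : ℂ => Complex.log (1 - w)) ((1 - z)⁻¹ * (-1)) z :=
    HasDerivAt.comp z (Complex.hasDerivAt_log hslit') inner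
  have d5 := d3.mul d4
  have total := (d1.add d2).add d5
  have heq : -(Complex.log (1 - z)) / z + -(Complex.log (1 - (1 - z))) / (1 - z) * (-1) +
      (z⁻¹ * Complex.log (1 - z) + Complex.log z * ((1 - z)⁻¹ * (-1))) = 0 := by
    rw [show (1 : ℂ) - (1 - z) = z by ring]
    field_simp
    ring
  rw [heq] at total
  exact total

lemma RF_const {z w : ℂ} (hz : z ∈ RS) (hw : w ∈ RS) : RF z = RF w := by
  have hconv : Convex ℝ RS := (convex_ball _ _).inter (convex_ball _ _)
  have hderiv : ∀ x ∈ RS, HasFDerivWithinAt RF (0 : ℂ →L[ℝ] ℂ) RS x := by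
    intro x hx
    have h1 : HasFDerivAt RF (0 : ℂ →L[ℂ] ℂ) x := by
      have := (RF_hasDerivAt hx).hasFDerivAt
      convert this using 1
      ext w
      simp
      ext w; simp
    have h2 := h1.restrictScalars ℝ
    have h3 : ((0 : ℂ →L[ℂ] ℂ).restrictScalars ℝ) = (0 : ℂ →L[ℝ] ℂ) := by
      ext w; simp
    rw [h3] at h2
    exact h2.hasFDerivWithinAt
  have := hconv.norm_image_sub_le_of_norm_hasFDerivWithin_le (C := 0) hderiv
    (fun x _ => by simp) hw hz
  rw [zero_mul] at this
  have h0 : RF z - RF w = 0 := norm_le_zero_iff.mp this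
  linear_combination h0

lemma mem_RS_of_Ioo {x : ℝ} (hx : x ∈ Ioo (0:ℝ) 1) : (x : ℂ) ∈ RS := by
  constructor
  · rw [Metric.mem_ball, dist_zero_right, Complex.norm_real, Real.norm_eq_abs,
      abs_of_pos hx.1]
    exact hx.2
  · rw [Metric.mem_ball, dist_eq_norm, ← Complex.ofReal_one, ← Complex.ofReal_sub,
      Complex.norm_real, Real.norm_eq_abs, abs_of_neg (by linarith [hx.2])]
    linarith [hx.1]

lemma real_log_mul_log_tendsto :
    Tendsto (fun x : ℝ => Real.log x * Real.log (1 - x)) (nhdsWithin 0 (Ioi 0)) (nhds 0) := by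
  have hg : Tendsto (fun x : ℝ => -2 * (Real.log x * x)) (nhdsWithin 0 (Ioi 0)) (nhds 0) := by
    have := tendsto_log_mul_rpow_nhdsGT_zero (r := 1) one_pos
    simp only [Real.rpow_one] at this
    have h2 := this.const_mul (-2 : ℝ)
    simpa using h2
  apply squeeze_zero_norm' _ hg
  filter_upwards [Ioo_mem_nhdsGT_of_mem (by norm_num : (0:ℝ) ∈ Ico (0:ℝ) (1/2))] with x hx
  obtain ⟨hx0, hx12⟩ := hx
  have h1x : (0:ℝ) < 1 - x := by linarith
  have hlx : Real.log x < 0 := Real.log_neg hx0 (by linarith)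
  have hl1x : Real.log (1 - x) ≤ 0 := Real.log_nonpos (by linarith) (by linarith)
  have key : -Real.log (1 - x) ≤ 2 * x := by
    have h2 : Real.log (1 - x)⁻¹ ≤ (1 - x)⁻¹ - 1 :=
      Real.log_le_sub_one_of_pos (by positivity)
    rw [Real.log_inv] at h2
    have h3 : (1 - x)⁻¹ - 1 = x / (1 - x) := by field_simp; ring
    have h4 : x / (1 - x) ≤ 2 * x := by
      rw [div_le_iff₀ h1x]
      nlinarith
    linarith
  rw [Real.norm_eq_abs, abs_mul, abs_of_neg hlx, abs_of_nonpos hl1x]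
  nlinarith

lemma RF_eq_pi_sq_div_six {z : ℂ} (hz : z ∈ RS) : RF z = ((Real.pi ^ 2 / 6 : ℝ) : ℂ) := by
  have hhalf : ((1/2 : ℝ) : ℂ) ∈ RS := mem_RS_of_Ioo (by norm_num)
  rw [RF_const hz hhalf]
  have T1 : Tendsto (fun x : ℝ => RF x) (nhdsWithin 0 (Ioi 0)) (nhds (RF ((1/2 : ℝ) : ℂ))) := by
    apply Tendsto.congr' _ tendsto_const_nhds
    filter_upwards [Ioo_mem_nhdsGT_of_mem (by norm_num : (0:ℝ) ∈ Ico (0:ℝ) (1/2))] with x hx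
    exact RF_const hhalf (mem_RS_of_Ioo ⟨hx.1, by linarith [hx.2]⟩)
  have hr2c : Tendsto (fun x : ℝ => (x : ℂ)) (nhdsWithin 0 (Ioi 0)) (nhds 0) := by
    have := Complex.continuous_ofReal.tendsto 0
    exact (this.mono_left nhdsWithin_le_nhds).congr (fun x => rfl)
  have Ta : Tendsto (fun x : ℝ => Li 2 (x : ℂ)) (nhdsWithin 0 (Ioi 0)) (nhds 0) := by
    have hc := (li2_continuousOn 0 (by simp)).tendsto
    rw [li2_zero] at hc
    apply hc.comp
    apply tendsto_nhdsWithin_of_tendsto_nhds_of_eventually_within _ hr2c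
    filter_upwards [Ioo_mem_nhdsGT_of_mem (by norm_num : (0:ℝ) ∈ Ico (0:ℝ) 1)] with x hx
    rw [Metric.mem_closedBall, dist_zero_right, Complex.norm_real, Real.norm_eq_abs,
      abs_of_pos hx.1]
    exact hx.2.le
  have Tb : Tendsto (fun x : ℝ => Li 2 (1 - (x : ℂ))) (nhdsWithin 0 (Ioi 0))
      (nhds ((Real.pi ^ 2 / 6 : ℝ) : ℂ)) := by
    have hc := (li2_continuousOn 1 (by simp)).tendsto
    rw [li2_one] at hc
    apply hc.comp
    apply tendsto_nhdsWithin_of_tendsto_nhds_of_eventually_within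
    · have : Tendsto (fun x : ℝ => 1 - (x : ℂ)) (nhdsWithin 0 (Ioi 0)) (nhds (1 - 0)) :=
        (tendsto_const_nhds.sub hr2c)
      simpa using this
    · filter_upwards [Ioo_mem_nhdsGT_of_mem (by norm_num : (0:ℝ) ∈ Ico (0:ℝ) 1)] with x hx
      rw [Metric.mem_closedBall, dist_zero_right, ← Complex.ofReal_one, ← Complex.ofReal_sub,
        Complex.norm_real, Real.norm_eq_abs, abs_of_pos (by linarith [hx.2])]
      linarith [hx.1]
  have Tc : Tendsto (fun x : ℝ => Complex.log (x : ℂ) * Complex.log (1 - (x : ℂ)))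
      (nhdsWithin 0 (Ioi 0)) (nhds 0) := by
    have hreal := real_log_mul_log_tendsto
    have := (Complex.continuous_ofReal.tendsto 0).comp hreal
    apply this.congr'
    filter_upwards [Ioo_mem_nhdsGT_of_mem (by norm_num : (0:ℝ) ∈ Ico (0:ℝ) 1)] with x hx
    simp only [Function.comp_apply]
    rw [Complex.ofReal_mul, Complex.ofReal_log hx.1.le,
      Complex.ofReal_log (by linarith [hx.2] : (0:ℝ) ≤ 1 - x)]
    push_cast
    ring
  have T2 : Tendsto (fun x : ℝ => RF x) (nhdsWithin 0 (Ioi 0))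
      (nhds (0 + ((Real.pi ^ 2 / 6 : ℝ) : ℂ) + 0)) := by
    exact (Ta.add Tb).add Tc
  have := tendsto_nhds_unique T1 T2
  rw [this]
  ring

/-! ### Evaluation at (1+i)/2 -/

lemma sqrt2_sq : Real.sqrt 2 * Real.sqrt 2 = 2 := Real.mul_self_sqrt (by norm_num)

lemma sqrt2_pos : (0:ℝ) < Real.sqrt 2 := Real.sqrt_pos.mpr (by norm_num)

lemma w_abs : ‖((1 + I)/2 : ℂ)‖ = Real.sqrt 2 / 2 := by
  rw [norm_div, Complex.norm_def, Complex.normSq_apply]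
  simp [Complex.add_re, Complex.add_im]
  norm_num

lemma w_norm : ‖((1 + I)/2 : ℂ)‖ = Real.sqrt 2 / 2 := by
  rw [w_abs]

lemma sqrt2_div_two_lt_one : Real.sqrt 2 / 2 < 1 := by
  nlinarith [sqrt2_sq, sqrt2_pos]

lemma w_mem : ((1 + I)/2 : ℂ) ∈ RS := by
  constructor
  · rw [Metric.mem_ball, dist_zero_right, w_norm]
    exact sqrt2_div_two_lt_one
  · rw [Metric.mem_ball, dist_eq_norm]
    have h : ((1 + I)/2 : ℂ) - 1 = -((1 - I)/2 : ℂ) := by ring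
    rw [h, norm_neg]
    have h2 : ‖((1 - I)/2 : ℂ)‖ = Real.sqrt 2 / 2 := by
      have : ((1 - I)/2 : ℂ) = (starRingEnd ℂ) ((1 + I)/2) := by
        simp [map_div₀]
        rw [show (starRingEnd ℂ) 2 = 2 from Complex.conj_ofNat 2]
        ring
      rw [this, RCLike.norm_conj, w_norm]
    rw [h2]
    exact sqrt2_div_two_lt_one

lemma w_arg : ((1 + I)/2 : ℂ).arg = Real.pi / 4 := by
  have hw : ((1 + I)/2 : ℂ) = ((Real.sqrt 2 / 2 : ℝ) : ℂ) *
      (↑(Real.cos (Real.pi/4)) + ↑(Real.sin (Real.pi/4)) * I) := by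
    rw [Real.cos_pi_div_four, Real.sin_pi_div_four]
    rw [Complex.ext_iff]
    constructor <;> simp <;> nlinarith [sqrt2_sq]
  rw [hw, Complex.arg_real_mul _ (by positivity : (0:ℝ) < Real.sqrt 2 / 2),
    Complex.ofReal_cos, Complex.ofReal_sin, Complex.arg_cos_add_sin_mul_I]
  constructor
  · nlinarith [Real.pi_pos]
  · nlinarith [Real.pi_pos]

lemma one_sub_w : (1 : ℂ) - (1 + I)/2 = (starRingEnd ℂ) ((1 + I)/2) := by
  simp [map_div₀]
  rw [show (starRingEnd ℂ) 2 = 2 from Complex.conj_ofNat 2]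
  ring

lemma log_abs_w : Real.log (Real.sqrt 2 / 2) = -(Real.log 2 / 2) := by
  rw [Real.log_div (ne_of_gt sqrt2_pos) (by norm_num), Real.log_sqrt (by norm_num)]
  ring

lemma re_li2_w : (Li 2 ((1 + I)/2)).re = 5 * Real.pi ^ 2 / 96 - (Real.log 2) ^ 2 / 8 := by
  have hRF := RF_eq_pi_sq_div_six w_mem
  unfold RF at hRF
  rw [one_sub_w, li2_conj] at hRF
  have hlog : Complex.log ((starRingEnd ℂ) ((1 + I)/2)) = (starRingEnd ℂ) (Complex.log ((1 + I)/2)) := by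
    apply Complex.log_conj
    rw [w_arg]
    intro h
    nlinarith [Real.pi_pos]
  rw [hlog, Complex.mul_conj] at hRF
  have := congrArg Complex.re hRF
  simp only [Complex.add_re, Complex.conj_re, Complex.ofReal_re] at this
  rw [Complex.normSq_apply, Complex.log_re, Complex.log_im, w_arg, w_abs, log_abs_w] at this
  nlinarith [this]

theorem stmt9 : 5 * Real.pi ^ 2 / 48 - (Real.log 2) ^ 2 / 4 = (Li 2 (((1/2 : ℝ) : ℂ) * Complex.exp ((Real.pi / 2) * Complex.I))).re - 2 * (Li 2 (((1 / Real.sqrt 2 : ℝ) : ℂ) * Complex.exp ((3 * Real.pi / 4) * Complex.I))).re := by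
  have hz1 : (((1/2 : ℝ) : ℂ) * Complex.exp ((Real.pi / 2) * Complex.I)) = I/2 := by
    rw [show ((Real.pi : ℂ) / 2) = ((Real.pi / 2 : ℝ) : ℂ) by push_cast; ring,
      Complex.exp_mul_I, ← Complex.ofReal_cos, ← Complex.ofReal_sin,
      Real.cos_pi_div_two, Real.sin_pi_div_two]
    push_cast
    ring
  have hz2 : (((1 / Real.sqrt 2 : ℝ) : ℂ) * Complex.exp ((3 * Real.pi / 4) * Complex.I))
      = -((starRingEnd ℂ) ((1 + I)/2)) := by
    rw [show ((3 * (Real.pi:ℂ) / 4)) = ((3 * Real.pi / 4 : ℝ) : ℂ) by push_cast; ring,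
      Complex.exp_mul_I, ← Complex.ofReal_cos, ← Complex.ofReal_sin,
      show (3 * Real.pi / 4 : ℝ) = Real.pi - Real.pi/4 by ring,
      Real.cos_pi_sub, Real.sin_pi_sub, Real.cos_pi_div_four, Real.sin_pi_div_four]
    rw [show (-((starRingEnd ℂ) ((1 + I)/2))) = (-1 + I)/2 by
      rw [map_div₀, show (starRingEnd ℂ) 2 = 2 from Complex.conj_ofNat 2]
      simp
      ring]
    rw [Complex.ext_iff]
    constructor <;> simp <;> nlinarith [sqrt2_sq, sqrt2_pos]
  have hw2 : (((1 + I)/2 : ℂ))^2 = I/2 := by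
    linear_combination (1/4 : ℂ) * Complex.I_sq
  have hdup := li2_duplication (z := (1 + I)/2) (by rw [w_norm]; exact sqrt2_div_two_lt_one.le)
  rw [hw2] at hdup
  have hre := congrArg Complex.re hdup
  have hhalf : (Li 2 (I/2) / 2).re = (Li 2 (I/2)).re / 2 := by
    rw [Complex.div_re]
    simp [Complex.normSq_apply]
    ring
  rw [Complex.add_re, hhalf] at hre
  have hconj : (Li 2 (-((starRingEnd ℂ) ((1 + I)/2)))).re = (Li 2 (-((1 + I)/2))).re := by
    rw [show (-((starRingEnd ℂ) ((1 + I)/2)) : ℂ) = (starRingEnd ℂ) (-((1 + I)/2)) by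
      rw [map_neg], li2_conj, Complex.conj_re]
  rw [hz1, hz2, hconj]
  have h1 := re_li2_w
  linarith
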